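/- Let q be a prime power and q - 1 = ℓs for positive integers ℓ, s. Let f ∈ F_q[x] and r a positive integer. Then P(x) = x^r · f(x^s) is a permutation polynomial of F_q if and only if gcd(r, s) = 1 and the map x ↦ x^r · f(x)^s permutes the set μ_ℓ of ℓ-th roots of unity in F_q. -/

import Mathlib

/-- In a cyclic group of order `ℓ * s`, every element whose `ℓ`-th power is `1`
is an `s`-th power. -/
lemma exists_pow_eq_of_pow_eq_one {G : Type*} [Group G] [Fintype G] [IsCyclic G]
    {ℓ s : ℕ} (hℓ : 0 < ℓ) (hcard : Fintype.card G = ℓ * s)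
    {u : G} (hu : u ^ ℓ = 1) : ∃ v : G, v ^ s = u := by
  obtain ⟨g, hg⟩ := IsCyclic.exists_generator (α := G)
  have horder : orderOf g = ℓ * s := by
    rw [orderOf_eq_card_of_forall_mem_zpowers hg, Nat.card_eq_fintype_card, hcard]
  obtain ⟨k, hk⟩ := hg u
  have hk : g ^ k = u := hk
  have hpow : g ^ (k * (ℓ : ℤ)) = 1 := by
    rw [zpow_mul, hk]
    exact_mod_cast hu
  have hdvd : ((ℓ * s : ℕ) : ℤ) ∣ k * (ℓ : ℤ) := by
    rw [← horder]
    exact orderOf_dvd_iff_zpow_eq_one.mpr hpow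
  have hsdvd : (s : ℤ) ∣ k := by
    have hℓz : (ℓ : ℤ) ≠ 0 := by exact_mod_cast hℓ.ne'
    rcases hdvd with ⟨c, hc⟩
    refine ⟨c, ?_⟩
    have : (ℓ : ℤ) * k = (ℓ : ℤ) * ((s : ℤ) * c) := by push_cast at hc ⊢; linarith [hc]
    exact mul_left_cancel₀ hℓz this
  rcases hsdvd with ⟨m, hm⟩
  refine ⟨g ^ m, ?_⟩
  rw [← hk, hm, ← zpow_natCast (g ^ m) s, ← zpow_mul, mul_comm]

/-- Park–Lee / Wang / Zieve criterion. -/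
theorem pp_criterion_cyclotomic {F : Type*} [Field F] [Fintype F]
    (q ℓ s r : ℕ) (hq : Fintype.card F = q)
    (hℓ : 0 < ℓ) (hs : 0 < s) (hr : 0 < r) (hls : ℓ * s = q - 1)
    (f : Polynomial F) :
    Function.Bijective (fun x : F => x ^ r * f.eval (x ^ s)) ↔
      (Nat.gcd r s = 1 ∧
        Set.BijOn (fun x : F => x ^ r * (f.eval x) ^ s)
          {x : F | x ^ ℓ = 1} {x : F | x ^ ℓ = 1}) := by
  set P : F → F := fun x : F => x ^ r * f.eval (x ^ s) with hP
  set g : F → F := fun x : F => x ^ r * (f.eval x) ^ s with hg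
  haveI : Fintype Fˣ := Fintype.ofFinite Fˣ
  have hcardU : Fintype.card Fˣ = ℓ * s := by
    rw [← Nat.card_eq_fintype_card, Nat.card_units, Nat.card_eq_fintype_card, hq, hls]
  -- every nonzero element to the power ℓ*s is 1
  have hApow : ∀ x : F, x ≠ 0 → x ^ (ℓ * s) = 1 := by
    intro x hx
    rw [hls, ← hq]
    exact FiniteField.pow_card_sub_one_eq_one x hx
  -- nonzero s-th powers are ℓ-th roots of unity
  have hsroot : ∀ x : F, x ≠ 0 → (x ^ s) ^ ℓ = 1 := by
    intro x hx
    rw [← pow_mul, mul_comm]; exact hApow x hx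
  -- surjectivity of s-power map onto μ_ℓ
  have hBsurj : ∀ u : F, u ^ ℓ = 1 → ∃ x : F, x ≠ 0 ∧ x ^ s = u := by
    intro u hu
    have hune : u ≠ 0 := by
      intro h; rw [h, zero_pow hℓ.ne'] at hu; exact zero_ne_one hu
    have hu' : (Units.mk0 u hune) ^ ℓ = 1 := by
      ext; push_cast; exact hu
    obtain ⟨v, hv⟩ := exists_pow_eq_of_pow_eq_one hℓ hcardU hu'
    refine ⟨(v : F), Units.ne_zero v, ?_⟩
    have := congrArg (Units.val) hv
    push_cast at this
    simpa using this
  -- key relation : g (x^s) = (P x)^s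
  have hkey : ∀ x : F, g (x ^ s) = (P x) ^ s := by
    intro x
    simp only [hP, hg, mul_pow, ← pow_mul, mul_comm r s]
  have hP0 : P 0 = 0 := by
    simp only [hP, zero_pow hr.ne', zero_mul]
  have hμfin : ({x : F | x ^ ℓ = 1}).Finite := Set.toFinite _
  constructor
  · rintro hbij
    have hPne : ∀ x : F, x ≠ 0 → P x ≠ 0 := by
      intro x hx h
      exact hx (hbij.injective (h.trans hP0.symm))
    have hmapsTo : Set.MapsTo g {x : F | x ^ ℓ = 1} {x : F | x ^ ℓ = 1} := by
      intro u hu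
      obtain ⟨x, hx, hxs⟩ := hBsurj u hu
      have : g u = (P x) ^ s := by rw [← hxs]; exact hkey x
      simp only [Set.mem_setOf_eq] at *
      rw [this]
      exact hsroot _ (hPne x hx)
    have hsurjOn : Set.SurjOn g {x : F | x ^ ℓ = 1} {x : F | x ^ ℓ = 1} := by
      intro w hw
      obtain ⟨z, hz, hzs⟩ := hBsurj w hw
      obtain ⟨x, hx⟩ := hbij.surjective z
      have hxne : x ≠ 0 := by
        intro h; rw [h, hP0] at hx; exact hz hx.symm
      refine ⟨x ^ s, ?_, ?_⟩
      · exact hsroot x hxne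
      · rw [hkey x, hx, hzs]
    constructor
    · -- gcd r s = 1
      by_contra hgcd
      have hdpos : 0 < Nat.gcd r s := Nat.gcd_pos_of_pos_left _ hr
      have h2 : 2 ≤ Nat.gcd r s := by omega
      obtain ⟨p, hp, hpd⟩ := Nat.exists_prime_and_dvd (by omega : Nat.gcd r s ≠ 1)
      have hpr : p ∣ r := hpd.trans (Nat.gcd_dvd_left r s)
      have hps : p ∣ s := hpd.trans (Nat.gcd_dvd_right r s)
      have hpcard : p ∣ Fintype.card Fˣ := by
        rw [hcardU]; exact Dvd.dvd.mul_left hps ℓ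
      haveI : Fact p.Prime := ⟨hp⟩
      obtain ⟨t, ht⟩ := exists_prime_orderOf_dvd_card p hpcard
      have htne : t ≠ 1 := by
        intro h; rw [h, orderOf_one] at ht; exact hp.one_lt.ne' ht.symm
      have htr : (t : F) ^ r = 1 := by
        have h : t ^ r = 1 := by
          apply orderOf_dvd_iff_pow_eq_one.mp; rw [ht]; exact hpr
        rw [← Units.val_pow_eq_pow_val, h, Units.val_one]
      have hts : (t : F) ^ s = 1 := by
        have h : t ^ s = 1 := by
          apply orderOf_dvd_iff_pow_eq_one.mp; rw [ht]; exact hps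
        rw [← Units.val_pow_eq_pow_val, h, Units.val_one]
      have hPt : P (t : F) = P 1 := by
        simp only [hP, htr, hts, one_pow, one_mul]
      have h1 : (t : F) = 1 := hbij.injective hPt
      exact htne (Units.val_eq_one.mp h1)
    · exact ((hμfin.surjOn_iff_bijOn_of_mapsTo hmapsTo).mp hsurjOn)
  · rintro ⟨hgcd, hbijOn⟩
    rw [← Finite.injective_iff_bijective]
    -- injectivity
    have hfne : ∀ x : F, x ≠ 0 → f.eval (x ^ s) ≠ 0 := by
      intro x hx h
      have hmem : x ^ s ∈ {y : F | y ^ ℓ = 1} := hsroot x hx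
      have := hbijOn.mapsTo hmem
      simp only [hg, Set.mem_setOf_eq, h, zero_pow hs.ne', mul_zero] at this
      exact zero_ne_one ((zero_pow hℓ.ne').symm.trans this)
    have hPne : ∀ x : F, x ≠ 0 → P x ≠ 0 := by
      intro x hx
      simp only [hP]
      exact mul_ne_zero (pow_ne_zero r hx) (hfne x hx)
    intro a b hab
    by_cases ha : a = 0
    · by_cases hb : b = 0
      · rw [ha, hb]
      · exfalso; apply hPne b hb; rw [← hab, ha, hP0]
    · by_cases hb : b = 0
      · exfalso; apply hPne a ha; rw [hab, hb, hP0]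
      · -- both nonzero
        have hgs : g (a ^ s) = g (b ^ s) := by
          rw [hkey a, hkey b, hab]
        have hseq : a ^ s = b ^ s :=
          hbijOn.injOn (hsroot a ha) (hsroot b hb) hgs
        have hfeq : f.eval (a ^ s) = f.eval (b ^ s) := by rw [hseq]
        have hreq : a ^ r = b ^ r := by
          simp only [hP] at hab
          rw [← hfeq] at hab
          exact mul_right_cancel₀ (hfne a ha) hab
        -- pass to units
        set A : Fˣ := Units.mk0 a ha
        set B : Fˣ := Units.mk0 b hb
        have hAr : (A * B⁻¹) ^ r = 1 := by
          ext
          push_cast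
          field_simp [A, B]
          rw [div_pow]
          simp only [A, B, Units.val_mk0]
          rw [hreq, div_self (pow_ne_zero r hb)]
        have hAs : (A * B⁻¹) ^ s = 1 := by
          ext
          push_cast
          field_simp [A, B]
          rw [div_pow]
          simp only [A, B, Units.val_mk0]
          rw [hseq, div_self (pow_ne_zero s hb)]
        have hord : orderOf (A * B⁻¹) ∣ Nat.gcd r s :=
          Nat.dvd_gcd (orderOf_dvd_of_pow_eq_one hAr) (orderOf_dvd_of_pow_eq_one hAs)
        rw [hgcd, Nat.dvd_one, orderOf_eq_one_iff] at hord
        have : A = B := by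
          have := mul_inv_eq_one.mp hord
          exact this
        have := congrArg Units.val this
        simpa [A, B] using this
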